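/- Let F be a sector with a baseline and let (a,d) be a port candidate. Then for any two points p, q in F, |bdist(p,(a,d)) - bdist(q,(a,d))| ≤ 3. -/
import Mathlib


/-- A point in the plane. -/
abbrev Pt := ℝ × ℝ

/-- Two points span an axis-parallel (horizontal or vertical) segment. -/
def AxisParallel (a b : Pt) : Prop := a.1 = b.1 ∨ a.2 = b.2

/-- An orthogonal polyline inside the region `f`: a list of at least two points whose
consecutive segments are axis-parallel and contained in `f`. -/
def IsOrthoPolyline (f : Set Pt) (l : List Pt) : Prop :=
  2 ≤ l.length ∧ l.Chain' (fun a b => AxisParallel a b ∧ segment ℝ a b ⊆ f)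

/-- `PolyFrom f p q l`: `l` is an orthogonal polyline inside `f` from `p` to `q`. -/
def PolyFrom (f : Set Pt) (p q : Pt) (l : List Pt) : Prop :=
  IsOrthoPolyline f l ∧ l.head? = some p ∧ l.getLast? = some q

/-- The four axis directions. -/
inductive Dir | up | down | left | right
deriving DecidableEq

/-- The unit vector of a direction. -/
def Dir.vec : Dir → Pt
  | .up => (0, 1)
  | .down => (0, -1)
  | .left => (-1, 0)
  | .right => (1, 0)

/-- The polyline `l` arrives at its final point from direction `d`:
its last segment travels in direction `d`. -/
def ArrivesFrom (d : Dir) (l : List Pt) : Prop :=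
  ∃ x a : Pt, [x, a] <:+ l ∧ ∃ t : ℝ, 0 < t ∧ a - x = t • d.vec

/-- The bend distance from a point `p` inside a face `f` to a port candidate `(a, d)`:
the minimum number of bends of an orthogonal polyline inside `f` from `p` to `a` arriving
at `a` from direction `d`.  (A polyline on `m` points has `m - 2` bends; collinear
consecutive segments can always be merged, so the minimum is unaffected.) -/
noncomputable def bdist (f : Set Pt) (p a : Pt) (d : Dir) : ℕ :=
  sInf {b | ∃ l, PolyFrom f p a l ∧ ArrivesFrom d l ∧ l.length - 2 = b}

/-- `F` is a histogram over the horizontal baseline `δ` from `(x₁, y₀)` to `(x₂, y₀)`: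
the baseline is a segment on (the boundary of) `F`, and every point of `F` is reachable by a
vertical ray starting at the baseline and orthogonal to it. -/
def IsHistogram (F : Set Pt) (y₀ x₁ x₂ : ℝ) : Prop :=
  segment ℝ ((x₁, y₀) : Pt) ((x₂, y₀) : Pt) ⊆ F ∧
  ∀ p ∈ F, ((p.1, y₀) : Pt) ∈ segment ℝ ((x₁, y₀) : Pt) ((x₂, y₀) : Pt) ∧
    segment ℝ ((p.1, y₀) : Pt) p ⊆ F


lemma bdist_extend (f F : Set Pt) (hFf : F ⊆ f) (y₀ x₁ x₂ : ℝ)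
    (hhist : IsHistogram F y₀ x₁ x₂) (a : Pt) (d : Dir)
    (p q : Pt) (hp : p ∈ F) (hq : q ∈ F)
    (l : List Pt) (hl : PolyFrom f q a l) (hd : ArrivesFrom d l) :
    ∃ l', PolyFrom f p a l' ∧ ArrivesFrom d l' ∧ l'.length - 2 = (l.length - 2) + 3 := by
  obtain ⟨⟨hlen, hchain⟩, hhead, hlast⟩ := hl
  obtain ⟨t, rfl⟩ : ∃ t, l = q :: t := by
    cases l with
    | nil => simp at hhead
    | cons x t =>
      simp only [List.head?_cons, Option.some.injEq] at hhead
      exact ⟨t, by rw [hhead]⟩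
  have hseg1 : segment ℝ p ((p.1, y₀) : Pt) ⊆ f := by
    rw [segment_symm]
    exact fun z hz => hFf ((hhist.2 p hp).2 hz)
  have hseg2 : segment ℝ ((p.1, y₀) : Pt) ((q.1, y₀) : Pt) ⊆ f := fun z hz =>
    hFf (hhist.1 ((convex_segment _ _).segment_subset (hhist.2 p hp).1 (hhist.2 q hq).1 hz))
  have hseg3 : segment ℝ ((q.1, y₀) : Pt) q ⊆ f := fun z hz => hFf ((hhist.2 q hq).2 hz)
  refine ⟨[p, (p.1, y₀), (q.1, y₀)] ++ (q :: t), ⟨⟨?_, ?_⟩, rfl, ?_⟩, ?_, ?_⟩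
  · simp
  · exact List.IsChain.cons_cons ⟨Or.inl rfl, hseg1⟩ (List.IsChain.cons_cons ⟨Or.inr rfl, hseg2⟩
      (List.IsChain.cons_cons ⟨Or.inl rfl, hseg3⟩ hchain))
  · exact (List.getLast?_append_of_ne_nil [p, (p.1, y₀), (q.1, y₀)] (by simp)).trans hlast
  · obtain ⟨x', a', hsuf, ht⟩ := hd
    exact ⟨x', a', hsuf.trans (List.suffix_append _ _), ht⟩
  · simp only [List.length_append, List.length_cons, List.length]
    simp only [List.length_cons, List.length_nil] at hlen
    omega

lemma bdist_le_add_three (f F : Set Pt) (hFf : F ⊆ f) (y₀ x₁ x₂ : ℝ)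
    (hhist : IsHistogram F y₀ x₁ x₂) (a : Pt) (d : Dir)
    (p q : Pt) (hp : p ∈ F) (hq : q ∈ F) :
    bdist f p a d ≤ bdist f q a d + 3 := by
  by_cases hne : {b | ∃ l, PolyFrom f q a l ∧ ArrivesFrom d l ∧ l.length - 2 = b}.Nonempty
  · obtain ⟨l, hl, hdl, hlen⟩ := Nat.sInf_mem hne
    obtain ⟨l', hl', hdl', hlen'⟩ := bdist_extend f F hFf y₀ x₁ x₂ hhist a d p q hp hq l hl hdl
    have h1 : bdist f p a d ≤ l'.length - 2 := Nat.sInf_le ⟨l', hl', hdl', rfl⟩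
    calc bdist f p a d ≤ l'.length - 2 := h1
      _ = (l.length - 2) + 3 := hlen'
      _ = bdist f q a d + 3 := by rw [hlen]; rfl
  · have hpe : {b | ∃ l, PolyFrom f p a l ∧ ArrivesFrom d l ∧ l.length - 2 = b} = ∅ := by
      rw [Set.eq_empty_iff_forall_notMem]
      rintro b ⟨l, hl, hdl, -⟩
      obtain ⟨l', hl', hdl', -⟩ := bdist_extend f F hFf y₀ x₁ x₂ hhist a d q p hq hp l hl hdl
      exact hne ⟨l'.length - 2, l', hl', hdl', rfl⟩
    unfold bdist
    rw [hpe, Nat.sInf_empty]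
    exact Nat.zero_le _

/-- Let `F` be a sector with a baseline (a histogram) contained in the face `f`, and let
`(a, d)` be a port candidate.  Then for any two points `p, q ∈ F`,
`|bdist(p,(a,d)) - bdist(q,(a,d))| ≤ 3`. -/
theorem stmt_3 (f F : Set Pt) (hFf : F ⊆ f) (y₀ x₁ x₂ : ℝ)
    (hhist : IsHistogram F y₀ x₁ x₂) (a : Pt) (d : Dir)
    (p q : Pt) (hp : p ∈ F) (hq : q ∈ F) :
    |(bdist f p a d : ℤ) - (bdist f q a d : ℤ)| ≤ 3 := by
  have h1 := bdist_le_add_three f F hFf y₀ x₁ x₂ hhist a d p q hp hq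
  have h2 := bdist_le_add_three f F hFf y₀ x₁ x₂ hhist a d q p hq hp
  rw [abs_sub_le_iff]
  omega
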